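/- Let A, B ∈ (0, π/2], r > 0 and c_i ∈ (0, r] with A, B ≥ arctan(c_i/(2r)) and A + B ≥ arctan(2c_i/r). If ν_m ≥ 0 satisfies ν_m·(π − A − B) ≥ min(A, B), then c_i ≤ ν_m·π·r / (arctan(1/2) + ν_m·arctan 2). -/

import Mathlib

open Real

lemma arctan_mul_le (t : ℝ) (ht0 : 0 ≤ t) (ht1 : t ≤ 1) (x : ℝ) (hx : 0 ≤ x) :
    t * Real.arctan x ≤ Real.arctan (t * x) := by
  have key : MonotoneOn (fun y => Real.arctan (t * y) - t * Real.arctan y) (Set.Ici 0) := by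
    apply monotoneOn_of_deriv_nonneg (convex_Ici 0)
    · exact (Real.continuous_arctan.comp (continuous_const.mul continuous_id)).sub
        (continuous_const.mul Real.continuous_arctan) |>.continuousOn
    · intro y hy
      exact ((Real.differentiable_arctan.comp ((differentiable_id.const_mul t))) y |>.sub
        ((Real.differentiable_arctan y).const_mul t)).differentiableWithinAt
    · intro y hy
      have h1 : HasDerivAt (fun y => Real.arctan (t * y)) (t * (1 / (1 + (t * y) ^ 2))) y := by
        have := (Real.hasDerivAt_arctan (t * y)).comp y ((hasDerivAt_id y).const_mul t)
        simpa [mul_comm, Function.comp_def] using this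
      have h2 : HasDerivAt (fun y => t * Real.arctan y) (t * (1 / (1 + y ^ 2))) y :=
        (Real.hasDerivAt_arctan y).const_mul t
      rw [show deriv (fun y => Real.arctan (t * y) - t * Real.arctan y) y = _ from (h1.sub h2).deriv]
      have hy0 : 0 ≤ y := le_of_lt (by simpa using hy)
      have hden1 : (0:ℝ) < 1 + (t * y) ^ 2 := by positivity
      have hden2 : (0:ℝ) < 1 + y ^ 2 := by positivity
      have ha : (0:ℝ) ≤ 1 - t := by linarith
      have hb : (0:ℝ) ≤ 1 + t := by linarith
      have hsq : (t * y) ^ 2 ≤ y ^ 2 := by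
        nlinarith [mul_nonneg (mul_nonneg ha hb) (sq_nonneg y)]
      have : 1 / (1 + y ^ 2) ≤ 1 / (1 + (t * y) ^ 2) := by
        apply one_div_le_one_div_of_le hden1; linarith
      nlinarith
  have := key (Set.self_mem_Ici) (Set.mem_Ici.mpr hx) hx
  simpa using this

theorem stmt_17 (A B r c_i ν_m : ℝ)
    (hA : A ∈ Set.Ioc 0 (π / 2)) (hB : B ∈ Set.Ioc 0 (π / 2))
    (hr : 0 < r) (hci : c_i ∈ Set.Ioc 0 r)
    (hA' : A ≥ Real.arctan (c_i / (2 * r))) (hB' : B ≥ Real.arctan (c_i / (2 * r)))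
    (hAB : A + B ≥ Real.arctan (2 * c_i / r))
    (hν : 0 ≤ ν_m) (hmain : ν_m * (π - A - B) ≥ min A B) :
    c_i ≤ ν_m * π * r / (Real.arctan (1 / 2) + ν_m * Real.arctan 2) := by
  obtain ⟨hc0, hcr⟩ := hci
  set t := c_i / r with ht
  have ht0 : 0 < t := div_pos hc0 hr
  have ht1 : t ≤ 1 := (div_le_one hr).mpr hcr
  have e1 : c_i / (2 * r) = t * (1 / 2) := by rw [ht]; ring
  have e2 : 2 * c_i / r = t * 2 := by rw [ht]; ring
  have h1 : t * Real.arctan (1 / 2) ≤ Real.arctan (c_i / (2 * r)) := by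
    rw [e1]; exact arctan_mul_le t ht0.le ht1 _ (by norm_num)
  have h2 : t * Real.arctan 2 ≤ Real.arctan (2 * c_i / r) := by
    rw [e2]; exact arctan_mul_le t ht0.le ht1 _ (by norm_num)
  have hmin : t * Real.arctan (1 / 2) ≤ min A B :=
    le_min (h1.trans hA') (h1.trans hB')
  have hsum : t * Real.arctan 2 ≤ A + B := h2.trans hAB
  have hkey : t * (Real.arctan (1 / 2) + ν_m * Real.arctan 2) ≤ ν_m * π := by
    nlinarith [mul_le_mul_of_nonneg_left hsum hν]
  have hD : 0 < Real.arctan (1 / 2) + ν_m * Real.arctan 2 := by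
    have h1p : 0 < Real.arctan (1/2) := by
      rw [← Real.arctan_zero]; exact Real.arctan_strictMono (by norm_num)
    have h2p : 0 < Real.arctan 2 := by
      rw [← Real.arctan_zero]; exact Real.arctan_strictMono (by norm_num)
    nlinarith
  rw [le_div_iff₀ hD]
  have hct : c_i = t * r := by rw [ht]; field_simp
  nlinarith [hkey, mul_le_mul_of_nonneg_right hkey hr.le]
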